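/- For every m ≥ 2, complex numbers w_1, …, w_{m−1}, and v ∈ ℝ, the function v ↦ t^{(m−1)}(v; w_1, …, w_{m−2}) is differentiable and t^{(m)}(v; w_1, …, w_{m−1}) = w_{m−1} · t^{(m−1)}(v; w_1, …, w_{m−2}) − (d/dv) t^{(m−1)}(v; w_1, …, w_{m−2}). -/

import Mathlib

open MeasureTheory

/-- The contour from `∞·e^{5iπ/6}` to `∞·e^{iπ/6}` through the origin:
`γ(r) = |r|·e^{5iπ/6}` for `r ≤ 0` and `γ(r) = r·e^{iπ/6}` for `r ≥ 0`. -/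
noncomputable def airyContour (r : ℝ) : ℂ :=
  if r ≤ 0 then ((-r : ℝ) : ℂ) * Complex.exp (Complex.I * (5 * (Real.pi : ℂ) / 6))
  else ((r : ℝ) : ℂ) * Complex.exp (Complex.I * ((Real.pi : ℂ) / 6))

/-- The derivative (velocity) of the contour `airyContour`. -/
noncomputable def airyContourDeriv (r : ℝ) : ℂ :=
  if r ≤ 0 then -Complex.exp (Complex.I * (5 * (Real.pi : ℂ) / 6))
  else Complex.exp (Complex.I * ((Real.pi : ℂ) / 6))

lemma c56 : Complex.I * (5 * (Real.pi : ℂ) / 6) = ((5 * Real.pi / 6 : ℝ) : ℂ) * Complex.I := by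
  push_cast; ring

lemma c16 : Complex.I * ((Real.pi : ℂ) / 6) = ((Real.pi / 6 : ℝ) : ℂ) * Complex.I := by
  push_cast; ring

lemma exp_cube (x : ℝ) :
    Complex.exp ((x : ℂ) * Complex.I) ^ 3 = Complex.exp (((3 * x : ℝ) : ℂ) * Complex.I) := by
  rw [← Complex.exp_nat_mul]; congr 1; push_cast; ring

lemma exp_pi_div_two : Complex.exp (((Real.pi / 2 : ℝ) : ℂ) * Complex.I) = Complex.I := by
  rw [Complex.exp_mul_I, ← Complex.ofReal_cos, ← Complex.ofReal_sin,
    Real.cos_pi_div_two, Real.sin_pi_div_two]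
  simp

lemma exp56_cube : Complex.exp (Complex.I * (5 * (Real.pi : ℂ) / 6)) ^ 3 = Complex.I := by
  rw [c56, exp_cube]
  have : ((3 * (5 * Real.pi / 6) : ℝ) : ℂ) * Complex.I
      = ((Real.pi / 2 : ℝ) : ℂ) * Complex.I + 2 * (Real.pi : ℂ) * Complex.I := by
    push_cast; ring
  rw [this, Complex.exp_add, Complex.exp_two_pi_mul_I, mul_one, exp_pi_div_two]

lemma exp16_cube : Complex.exp (Complex.I * ((Real.pi : ℂ) / 6)) ^ 3 = Complex.I := by
  rw [c16, exp_cube]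
  have : ((3 * (Real.pi / 6) : ℝ) : ℂ) = ((Real.pi / 2 : ℝ) : ℂ) := by push_cast; ring
  rw [this, exp_pi_div_two]

lemma exp56_im : (Complex.exp (Complex.I * (5 * (Real.pi : ℂ) / 6))).im = 1 / 2 := by
  rw [c56, Complex.exp_ofReal_mul_I_im]
  have : (5:ℝ) * Real.pi / 6 = Real.pi - Real.pi / 6 := by ring
  rw [this, Real.sin_pi_sub, Real.sin_pi_div_six]

lemma exp16_im : (Complex.exp (Complex.I * ((Real.pi : ℂ) / 6))).im = 1 / 2 := by
  rw [c16, Complex.exp_ofReal_mul_I_im, Real.sin_pi_div_six]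

lemma exp56_norm : ‖Complex.exp (Complex.I * (5 * (Real.pi : ℂ) / 6))‖ = 1 := by
  rw [c56, Complex.norm_exp_ofReal_mul_I]

lemma exp16_norm : ‖Complex.exp (Complex.I * ((Real.pi : ℂ) / 6))‖ = 1 := by
  rw [c16, Complex.norm_exp_ofReal_mul_I]

lemma airyContour_norm (r : ℝ) : ‖airyContour r‖ = |r| := by
  unfold airyContour
  split_ifs with h
  · rw [norm_mul, exp56_norm, mul_one, Complex.norm_real, Real.norm_eq_abs, abs_neg]
  · rw [norm_mul, exp16_norm, mul_one, Complex.norm_real, Real.norm_eq_abs]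

lemma airyContour_im (r : ℝ) : (airyContour r).im = |r| / 2 := by
  unfold airyContour
  split_ifs with h
  · rw [Complex.mul_im, Complex.ofReal_re, Complex.ofReal_im, exp56_im, abs_of_nonpos h]; ring
  · rw [Complex.mul_im, Complex.ofReal_re, Complex.ofReal_im, exp16_im, abs_of_pos (lt_of_not_ge h)]; ring

lemma airyContour_cube (r : ℝ) : (airyContour r) ^ 3 = Complex.I * ((|r| : ℝ) : ℂ) ^ 3 := by
  unfold airyContour
  split_ifs with h
  · rw [mul_pow, exp56_cube, abs_of_nonpos h]; push_cast; ring
  · rw [mul_pow, exp16_cube, abs_of_pos (lt_of_not_ge h)]; ring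

lemma airyContourDeriv_norm (r : ℝ) : ‖airyContourDeriv r‖ = 1 := by
  unfold airyContourDeriv
  split_ifs with h
  · rw [norm_neg, exp56_norm]
  · exact exp16_norm

lemma airyContour_continuous : Continuous airyContour := by
  unfold airyContour
  apply Continuous.if_le
  · exact ((Complex.continuous_ofReal.comp continuous_neg)).mul continuous_const
  · exact (Complex.continuous_ofReal).mul continuous_const
  · exact continuous_id
  · exact continuous_const
  · intro x hx; simp [hx]

lemma airyContourDeriv_meas : MeasureTheory.AEStronglyMeasurable airyContourDeriv
    (MeasureTheory.volume : MeasureTheory.Measure ℝ) := by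
  apply Measurable.aestronglyMeasurable
  unfold airyContourDeriv
  exact Measurable.ite measurableSet_Iic measurable_const measurable_const

lemma expterm_norm (v r : ℝ) :
    ‖Complex.exp (Complex.I * ((airyContour r) ^ 3 / 3 + (v : ℂ) * airyContour r))‖
      = Real.exp (-(|r| ^ 3) / 3 - v * |r| / 2) := by
  rw [Complex.norm_exp]
  congr 1
  have him : ((airyContour r) ^ 3 / 3 + (v : ℂ) * airyContour r).im
      = |r| ^ 3 / 3 + v * (|r| / 2) := by
    rw [Complex.add_im, Complex.mul_im, Complex.ofReal_re, Complex.ofReal_im,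
      Complex.div_im, airyContour_cube, airyContour_im]
    simp
    rw [show (((|r|:ℝ):ℂ) ^ 3).re = |r| ^ 3 by rw [← Complex.ofReal_pow, Complex.ofReal_re]]
    ring
  rw [Complex.mul_re, Complex.I_re, Complex.I_im, him]
  ring

lemma integrable_G (n : ℕ) (c : ℝ) :
    Integrable (fun r : ℝ => (1 + |r|) ^ n * Real.exp (c * |r| - |r| ^ 3 / 3)) := by
  set g : ℝ → ℝ := fun r => (1 + |r|) ^ n * Real.exp (c * |r| - |r| ^ 3 / 3) with hg
  have hcont : Continuous g := by
    apply Continuous.mul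
    · exact (continuous_const.add continuous_abs).pow n
    · exact Real.continuous_exp.comp
        ((continuous_const.mul continuous_abs).sub ((continuous_abs.pow 3).div_const 3))
  set R : ℝ := max 1 (3 * (n + |c| + 1)) with hR
  have hkey : ∀ r : ℝ, R ≤ |r| → |g r| ≤ |Real.exp (-|r|)| := by
    intro r hr
    have h0 : (0:ℝ) ≤ |r| := abs_nonneg r
    have h1 : (1:ℝ) ≤ |r| := le_trans (le_max_left _ _) hr
    have hpow : (1 + |r|) ^ n ≤ Real.exp ((n:ℝ) * |r|) := by
      calc (1 + |r|) ^ n ≤ (Real.exp |r|) ^ n := by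
            apply pow_le_pow_left₀ (by positivity)
            linarith [Real.add_one_le_exp |r|]
          _ = Real.exp ((n:ℝ) * |r|) := by rw [← Real.exp_nat_mul]
    have hexp : ((n:ℝ)) * |r| + (c * |r| - |r| ^ 3 / 3) ≤ -|r| := by
      have h2 : 3 * ((n:ℝ) + |c| + 1) ≤ |r| := le_trans (le_max_right _ _) hr
      have h3 : 3 * ((n:ℝ) + |c| + 1) * |r| ≤ |r| ^ 2 := by
        have := mul_le_mul_of_nonneg_right h2 h0
        nlinarith
      have hc : c * |r| ≤ |c| * |r| := mul_le_mul_of_nonneg_right (le_abs_self c) h0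
      nlinarith [pow_le_pow_left₀ h0 (le_refl |r|) 3]
    have : g r ≤ Real.exp (-|r|) := by
      calc g r ≤ Real.exp ((n:ℝ) * |r|) * Real.exp (c * |r| - |r| ^ 3 / 3) := by
            apply mul_le_mul_of_nonneg_right hpow (Real.exp_nonneg _)
          _ = Real.exp ((n:ℝ) * |r| + (c * |r| - |r| ^ 3 / 3)) := (Real.exp_add _ _).symm
          _ ≤ Real.exp (-|r|) := Real.exp_le_exp.mpr hexp
    rw [abs_of_nonneg (by positivity), abs_of_nonneg (Real.exp_nonneg _)]
    exact this
  apply (hcont.locallyIntegrable).integrable_of_isBigO_atBot_atTop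
    (g := fun r : ℝ => Real.exp r) (g' := fun r : ℝ => Real.exp (-r))
  · apply Asymptotics.IsBigO.of_bound 1
    filter_upwards [Filter.eventually_le_atBot (-R)] with r hr
    have habs : |r| = -r := abs_of_nonpos (by linarith [le_trans hr (neg_nonpos_of_nonneg (le_trans zero_le_one (le_max_left 1 (3 * (n + |c| + 1)))))])
    have : R ≤ |r| := by rw [habs]; linarith
    simpa [one_mul, habs] using hkey r this
  · exact ⟨Set.Iic 0, Filter.Iic_mem_atBot 0, (integrableOn_exp_Iic 0)⟩
  · apply Asymptotics.IsBigO.of_bound 1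
    filter_upwards [Filter.eventually_ge_atTop R] with r hr
    have habs : |r| = r := abs_of_nonneg (le_trans (le_trans zero_le_one (le_max_left 1 (3 * (n + |c| + 1)))) hr)
    have : R ≤ |r| := by rw [habs]; exact hr
    simpa [one_mul, habs] using hkey r this
  · refine ⟨Set.Ioi 0, Filter.Ioi_mem_atTop 0, ?_⟩
    have := exp_neg_integrableOn_Ioi 0 (b := 1) one_pos
    simpa using this

/-- `t^{(m)}(v; w_1, …, w_{m−1}) = (1/2π) ∫ e^{i(b³/3 + vb)} ∏_{j=1}^{m−1}(w_j − ib) db`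
over the contour from `∞·e^{5iπ/6}` to `∞·e^{iπ/6}`; for `m = 1` this is the Airy function. -/
noncomputable def tFun (m : ℕ) (w : ℕ → ℂ) (v : ℝ) : ℂ :=
  (1 / (2 * Real.pi)) *
    ∫ r : ℝ,
      Complex.exp (Complex.I * ((airyContour r) ^ 3 / 3 + (v : ℂ) * airyContour r)) *
        (∏ j ∈ Finset.Icc 1 (m - 1), (w j - Complex.I * airyContour r)) *
        airyContourDeriv r

noncomputable def airyF (w : ℕ → ℂ) (k : ℕ) (v : ℝ) (r : ℝ) : ℂ :=
  Complex.exp (Complex.I * ((airyContour r) ^ 3 / 3 + (v : ℂ) * airyContour r)) *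
    (∏ j ∈ Finset.Icc 1 k, (w j - Complex.I * airyContour r)) * airyContourDeriv r

noncomputable def airyF' (w : ℕ → ℂ) (k : ℕ) (v : ℝ) (r : ℝ) : ℂ :=
  (Complex.I * airyContour r) * airyF w k v r

lemma tFun_eq_airyF (m : ℕ) (w : ℕ → ℂ) (v : ℝ) :
    tFun m w v = (1 / (2 * Real.pi)) * ∫ r : ℝ, airyF w (m - 1) v r := rfl

lemma airyF_meas (w : ℕ → ℂ) (k : ℕ) (v : ℝ) :
    AEStronglyMeasurable (airyF w k v) (volume : Measure ℝ) := by
  have h1 : Continuous fun r : ℝ =>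
      Complex.exp (Complex.I * ((airyContour r) ^ 3 / 3 + (v : ℂ) * airyContour r)) *
        (∏ j ∈ Finset.Icc 1 k, (w j - Complex.I * airyContour r)) := by
    apply Continuous.mul
    · exact Complex.continuous_exp.comp (continuous_const.mul
        (((airyContour_continuous.pow 3).div_const 3).add
          (continuous_const.mul airyContour_continuous)))
    · exact continuous_finset_prod _ fun j _ =>
        continuous_const.sub (continuous_const.mul airyContour_continuous)
  exact h1.aestronglyMeasurable.mul airyContourDeriv_meas

lemma airyF'_meas (w : ℕ → ℂ) (k : ℕ) (v : ℝ) :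
    AEStronglyMeasurable (airyF' w k v) (volume : Measure ℝ) :=
  ((continuous_const.mul airyContour_continuous).aestronglyMeasurable).mul (airyF_meas w k v)

lemma airyF_norm_le (w : ℕ → ℂ) (k : ℕ) {x v : ℝ} (r : ℝ) (hv : |x| ≤ v) :
    ‖airyF w k x r‖ ≤ (1 + ∑ j ∈ Finset.Icc 1 k, ‖w j‖) ^ k *
      ((1 + |r|) ^ k * Real.exp (v * |r| - |r| ^ 3 / 3)) := by
  set C : ℝ := 1 + ∑ j ∈ Finset.Icc 1 k, ‖w j‖ with hCdef
  have hsum : (0:ℝ) ≤ ∑ j ∈ Finset.Icc 1 k, ‖w j‖ :=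
    Finset.sum_nonneg fun j _ => norm_nonneg _
  have hC : 1 ≤ C := by rw [hCdef]; linarith
  have hr0 : (0:ℝ) ≤ |r| := abs_nonneg r
  have hprod : ‖∏ j ∈ Finset.Icc 1 k, (w j - Complex.I * airyContour r)‖
      ≤ (C * (1 + |r|)) ^ k := by
    rw [norm_prod]
    calc ∏ j ∈ Finset.Icc 1 k, ‖w j - Complex.I * airyContour r‖
        ≤ ∏ _j ∈ Finset.Icc 1 k, (C * (1 + |r|)) := by
          apply Finset.prod_le_prod (fun j _ => norm_nonneg _)
          intro j hj
          have h1 : ‖w j - Complex.I * airyContour r‖ ≤ ‖w j‖ + |r| := by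
            calc ‖w j - Complex.I * airyContour r‖ ≤ ‖w j‖ + ‖Complex.I * airyContour r‖ :=
                  norm_sub_le _ _
              _ = ‖w j‖ + |r| := by rw [norm_mul, Complex.norm_I, one_mul, airyContour_norm]
          have h2 : ‖w j‖ ≤ C - 1 := by
            simp only [hCdef, add_sub_cancel_left]
            exact Finset.single_le_sum (fun j _ => norm_nonneg (w j)) hj
          nlinarith
      _ = (C * (1 + |r|)) ^ k := by
          rw [Finset.prod_const, Nat.card_Icc]; norm_num
  have hexp : Real.exp (-(|r| ^ 3) / 3 - x * |r| / 2) ≤ Real.exp (v * |r| - |r| ^ 3 / 3) := by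
    apply Real.exp_le_exp.mpr
    nlinarith [neg_abs_le x, le_abs_self x]
  calc ‖airyF w k x r‖
      = Real.exp (-(|r| ^ 3) / 3 - x * |r| / 2) *
          ‖∏ j ∈ Finset.Icc 1 k, (w j - Complex.I * airyContour r)‖ := by
        unfold airyF
        rw [norm_mul, norm_mul, airyContourDeriv_norm, mul_one, expterm_norm]
    _ ≤ Real.exp (v * |r| - |r| ^ 3 / 3) * (C * (1 + |r|)) ^ k := by
        apply mul_le_mul hexp hprod (norm_nonneg _) (Real.exp_nonneg _)
    _ = C ^ k * ((1 + |r|) ^ k * Real.exp (v * |r| - |r| ^ 3 / 3)) := by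
        rw [mul_pow]; ring

lemma airyF_integrable (w : ℕ → ℂ) (k : ℕ) (v : ℝ) :
    Integrable (airyF w k v) (volume : Measure ℝ) := by
  apply Integrable.mono' (((integrable_G k |v|).const_mul
    ((1 + ∑ j ∈ Finset.Icc 1 k, ‖w j‖) ^ k))) (airyF_meas w k v)
  exact Filter.Eventually.of_forall fun r => airyF_norm_le w k r le_rfl

lemma airyF_hasDerivAt (w : ℕ → ℂ) (k : ℕ) (r : ℝ) (x : ℝ) :
    HasDerivAt (fun v : ℝ => airyF w k v r) (airyF' w k x r) x := by
  set γ : ℂ := airyContour r with hγ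
  have hz : HasDerivAt (fun z : ℂ => Complex.I * (γ ^ 3 / 3 + z * γ)) (Complex.I * γ) (x : ℂ) := by
    have h := (((hasDerivAt_id (x : ℂ)).mul_const γ).const_add (γ ^ 3 / 3)).const_mul Complex.I
    simpa using h
  have h1 := hz.cexp
  have h2 := h1.comp_ofReal
  have h3 := (h2.mul_const (∏ j ∈ Finset.Icc 1 k, (w j - Complex.I * γ))).mul_const
    (airyContourDeriv r)
  refine h3.congr_deriv ?_
  unfold airyF' airyF
  ring

lemma airyF'_bound (w : ℕ → ℂ) (k : ℕ) (v₀ : ℝ) (r : ℝ) (x : ℝ) (hx : x ∈ Metric.ball v₀ 1) :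
    ‖airyF' w k x r‖ ≤ (1 + ∑ j ∈ Finset.Icc 1 k, ‖w j‖) ^ k *
      ((1 + |r|) ^ (k + 1) * Real.exp ((|v₀| + 1) * |r| - |r| ^ 3 / 3)) := by
  have hxv : |x| ≤ |v₀| + 1 := by
    have : |x - v₀| < 1 := by rwa [Metric.mem_ball, Real.dist_eq] at hx
    calc |x| = |x - v₀ + v₀| := by ring_nf
      _ ≤ |x - v₀| + |v₀| := abs_add_le _ _
      _ ≤ |v₀| + 1 := by linarith
  have h1 : ‖airyF' w k x r‖ = |r| * ‖airyF w k x r‖ := by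
    unfold airyF'
    rw [norm_mul, norm_mul, Complex.norm_I, one_mul, airyContour_norm]
  rw [h1]
  have h2 := airyF_norm_le w k (v := |v₀| + 1) r hxv
  have hr0 : (0:ℝ) ≤ |r| := abs_nonneg r
  calc |r| * ‖airyF w k x r‖
      ≤ (1 + |r|) * ((1 + ∑ j ∈ Finset.Icc 1 k, ‖w j‖) ^ k *
          ((1 + |r|) ^ k * Real.exp ((|v₀| + 1) * |r| - |r| ^ 3 / 3))) := by
        apply mul_le_mul (by linarith) h2 (norm_nonneg _) (by linarith)
    _ = (1 + ∑ j ∈ Finset.Icc 1 k, ‖w j‖) ^ k *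
          ((1 + |r|) ^ (k + 1) * Real.exp ((|v₀| + 1) * |r| - |r| ^ 3 / 3)) := by
        rw [pow_succ]; ring

lemma airy_main (w : ℕ → ℂ) (k : ℕ) (v₀ : ℝ) :
    Integrable (airyF' w k v₀) (volume : Measure ℝ) ∧
      HasDerivAt (fun v : ℝ => ∫ r : ℝ, airyF w k v r) (∫ r : ℝ, airyF' w k v₀ r) v₀ :=
  hasDerivAt_integral_of_dominated_loc_of_deriv_le (μ := (volume : Measure ℝ))
    (F := fun v r => airyF w k v r) (F' := fun v r => airyF' w k v r) (x₀ := v₀)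
    (bound := fun r => (1 + ∑ j ∈ Finset.Icc 1 k, ‖w j‖) ^ k *
      ((1 + |r|) ^ (k + 1) * Real.exp ((|v₀| + 1) * |r| - |r| ^ 3 / 3)))
    (Metric.ball_mem_nhds v₀ one_pos)
    (Filter.Eventually.of_forall fun x => airyF_meas w k x)
    (airyF_integrable w k v₀)
    (airyF'_meas w k v₀)
    (Filter.Eventually.of_forall fun r x hx => airyF'_bound w k v₀ r x hx)
    ((integrable_G (k + 1) (|v₀| + 1)).const_mul _)
    (Filter.Eventually.of_forall fun r x _ => airyF_hasDerivAt w k r x)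

/-- for `m ≥ 2`, `v ↦ t^{(m−1)}(v; w_1, …, w_{m−2})` is differentiable and
`t^{(m)}(v; w_1, …, w_{m−1}) = w_{m−1}·t^{(m−1)}(v; w_1, …, w_{m−2}) − (d/dv)t^{(m−1)}(v; w_1, …, w_{m−2})`. -/
theorem tFun_recurrence (m : ℕ) (hm : 2 ≤ m) (w : ℕ → ℂ) (v : ℝ) :
    DifferentiableAt ℝ (tFun (m - 1) w) v ∧
      tFun m w v = w (m - 1) * tFun (m - 1) w v - deriv (tFun (m - 1) w) v := by
  obtain ⟨k, rfl⟩ : ∃ k, m = k + 2 := ⟨m - 2, by omega⟩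
  have main := airy_main w k v
  have hfun : tFun (k + 2 - 1) w = fun x : ℝ => (1 / (2 * Real.pi)) * ∫ r : ℝ, airyF w k x r := by
    funext x
    exact tFun_eq_airyF (k + 1) w x
  have hderiv : HasDerivAt (tFun (k + 2 - 1) w)
      ((1 / (2 * Real.pi)) * ∫ r : ℝ, airyF' w k v r) v := by
    rw [hfun]
    exact HasDerivAt.const_mul ((1 : ℂ) / (2 * (Real.pi : ℂ))) main.2
  refine ⟨hderiv.differentiableAt, ?_⟩
  rw [hderiv.deriv]
  have hsplit : ∀ r : ℝ, airyF w (k + 1) v r = w (k + 1) * airyF w k v r - airyF' w k v r := by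
    intro r
    simp only [airyF', airyF]
    rw [Finset.prod_Icc_succ_top (Nat.le_add_left 1 k)]
    ring
  have h1 : tFun (k + 2) w v = (1 / (2 * Real.pi)) * ∫ r : ℝ, airyF w (k + 1) v r :=
    tFun_eq_airyF (k + 2) w v
  rw [h1]
  rw [show (∫ r : ℝ, airyF w (k + 1) v r)
      = ∫ r : ℝ, (w (k + 1) * airyF w k v r - airyF' w k v r) from by simp_rw [hsplit]]
  rw [integral_sub ((airyF_integrable w k v).const_mul _) main.1, integral_const_mul]
  have h2 : tFun (k + 2 - 1) w v = (1 / (2 * Real.pi)) * ∫ r : ℝ, airyF w k v r :=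
    tFun_eq_airyF (k + 1) w v
  have h3 : k + 2 - 1 = k + 1 := rfl
  rw [h2, h3]
  ring
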